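/- Let p, m, q, T be positive integers and let Y ∈ ℝ^{p×T}, Z ∈ ℝ^{m×T}, P ∈ ℝ^{q×T}, E ∈ ℝ^{p×T}, A ∈ ℝ^{p×m}, Φ ∈ ℝ^{p×q} satisfy Y = A·Z + Φ·P + E. Let λ_A > 0 and λ_Φ > 0 satisfy λ_A ≥ (3/T)·‖E·Zᵀ‖₂ and λ_Φ ≥ (2/T)·‖vec(E·Pᵀ)‖_∞, define L(A',Φ') = (1/(2T))·‖Y − A'·Z − Φ'·P‖_F² + λ_A·‖A'‖_* + λ_Φ·‖vec(Φ')‖₁, and suppose Â, Φ̂ satisfy L(Â,Φ̂) ≤ L(A,Φ). Let [U_k U_c] ∈ ℝ^{p×p} and [V_k V_c] ∈ ℝ^{m×m} be orthogonal matrices with U_k ∈ ℝ^{p×k}, V_k ∈ ℝ^{m×k}, such that A = U_k·D·V_kᵀ for some D ∈ ℝ^{k×k}; set Δ_A = Â − A, Δ_{A,2} = U_c·U_cᵀ·Δ_A·V_c·V_cᵀ, Δ_{A,1} = Δ_A − Δ_{A,2}. Let S be the support of Φ, Δ_Φ = Φ̂ − Φ, and let Δ_{Φ,1} agree with Δ_Φ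 on entries in S and vanish elsewhere, with Δ_{Φ,2} = Δ_Φ − Δ_{Φ,1}. Then λ_A·‖Δ_{A,2}‖_* + λ_Φ·‖vec(Δ_{Φ,2})‖₁ ≤ 3·λ_A·‖Δ_{A,1}‖_* + 3·λ_Φ·‖vec(Δ_{Φ,1})‖₁. -/

import Mathlib

open Matrix

/-- The positive semidefinite square root of a positive semidefinite matrix
(the definition of `Matrix.PosSemidef.sqrt` in the older Mathlib, since removed). -/
noncomputable def psdSqrt {r : ℕ} {S : Matrix (Fin r) (Fin r) ℝ} (hS : S.PosSemidef) :
    Matrix (Fin r) (Fin r) ℝ :=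
  hS.1.eigenvectorUnitary.1 * diagonal ((↑) ∘ (√·) ∘ hS.1.eigenvalues) *
    (star hS.1.eigenvectorUnitary : Matrix (Fin r) (Fin r) ℝ)

/-- Frobenius norm of a real matrix: `(tr(MᵀM))^{1/2}`. -/
noncomputable def frobNorm {m n : ℕ} (M : Matrix (Fin m) (Fin n) ℝ) : ℝ :=
  Real.sqrt ((Mᵀ * M).trace)

/-- Nuclear norm of a real matrix: the trace of the positive semidefinite
square root of `MᵀM` (= sum of singular values). -/
noncomputable def nuclearNorm {m n : ℕ} (M : Matrix (Fin m) (Fin n) ℝ) : ℝ :=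
  (psdSqrt (Matrix.posSemidef_conjTranspose_mul_self M)).trace

/-- Spectral (ℓ2 → ℓ2 operator) norm of a real matrix: its largest singular value. -/
noncomputable def opNorm {m n : ℕ} (M : Matrix (Fin m) (Fin n) ℝ) : ℝ :=
  ‖LinearMap.toContinuousLinearMap (Matrix.toEuclideanLin M)‖

/-- The ℓ1 norm of the vectorization of a matrix. -/
noncomputable def vecL1 {m n : ℕ} (M : Matrix (Fin m) (Fin n) ℝ) : ℝ :=
  ∑ i, ∑ j, |M i j|

/-- The ℓ∞ norm of the vectorization of a matrix. -/
noncomputable def vecLinf {m n : ℕ} (M : Matrix (Fin m) (Fin n) ℝ) : ℝ :=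
  ⨆ i, ⨆ j, |M i j|

/-- Frobenius (trace) inner product of two matrices. -/
noncomputable def traceInner {m n : ℕ} (M N : Matrix (Fin m) (Fin n) ℝ) : ℝ :=
  (Mᵀ * N).trace

open scoped Classical in
/-- The inverse of the positive semidefinite square root of a positive semidefinite
matrix (junk value `0` if the matrix is not positive semidefinite). -/
noncomputable def matInvSqrt {r : ℕ} (S : Matrix (Fin r) (Fin r) ℝ) :
    Matrix (Fin r) (Fin r) ℝ :=
  if h : S.PosSemidef then (psdSqrt h)⁻¹ else 0

open scoped MatrixOrder in
lemma psdSqrt_eq_cfc {r : ℕ} {S : Matrix (Fin r) (Fin r) ℝ} (hS : S.PosSemidef) :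
    psdSqrt hS = CFC.sqrt S := by
  rw [CFC.sqrt_eq_cfc, cfc_nnreal_eq_real _ S, hS.1.cfc_eq]
  simp only [IsHermitian.cfc, Unitary.conjStarAlgAut_apply, psdSqrt]
  congr 3
  funext i
  simp [hS.eigenvalues_nonneg i]

open scoped MatrixOrder in
lemma psdSqrt_psd {r : ℕ} {S : Matrix (Fin r) (Fin r) ℝ} (hS : S.PosSemidef) :
    (psdSqrt hS).PosSemidef := by
  rw [psdSqrt_eq_cfc]; exact Matrix.nonneg_iff_posSemidef.mp (CFC.sqrt_nonneg S)

open scoped MatrixOrder in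
lemma psdSqrt_mul_self {r : ℕ} {S : Matrix (Fin r) (Fin r) ℝ} (hS : S.PosSemidef) :
    psdSqrt hS * psdSqrt hS = S := by
  rw [psdSqrt_eq_cfc]; exact CFC.sqrt_mul_sqrt_self S hS.nonneg

open scoped MatrixOrder in
lemma psd_eq_psdSqrt_of_sq_eq {r : ℕ} {B S : Matrix (Fin r) (Fin r) ℝ} (hB : B.PosSemidef)
    (hS : S.PosSemidef) (h : B ^ 2 = S) : B = psdSqrt hS := by
  rw [psdSqrt_eq_cfc]; exact (CFC.sqrt_unique (by rw [← sq]; exact h) hB.nonneg).symm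

lemma herm_star_mul_self_mul_eq_diagonal {r : ℕ} {S : Matrix (Fin r) (Fin r) ℝ}
    (hS : S.IsHermitian) :
    (star (hS.eigenvectorUnitary : Matrix (Fin r) (Fin r) ℝ)) * S
      * (hS.eigenvectorUnitary : Matrix (Fin r) (Fin r) ℝ)
      = diagonal (RCLike.ofReal ∘ hS.eigenvalues) := by
  have h2 := hS.spectral_theorem
  rw [Unitary.conjStarAlgAut_apply] at h2
  set U : Matrix (Fin r) (Fin r) ℝ := (hS.eigenvectorUnitary : Matrix (Fin r) (Fin r) ℝ)
  have hu : star U * U = 1 := Unitary.coe_star_mul_self _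
  calc star U * S * U = star U * (U * diagonal (RCLike.ofReal ∘ hS.eigenvalues) * star U) * U := by
        rw [← h2]
    _ = (star U * U) * diagonal (RCLike.ofReal ∘ hS.eigenvalues) * (star U * U) := by
        simp only [Matrix.mul_assoc]
    _ = _ := by rw [hu, Matrix.one_mul, Matrix.mul_one]

/-! ### Auxiliary lemmas -/

noncomputable def colNorm {a : ℕ} (v : Fin a → ℝ) : ℝ := Real.sqrt (v ⬝ᵥ v)

lemma colNorm_eq {a : ℕ} (v : Fin a → ℝ) :
    colNorm v = ‖(WithLp.equiv 2 (Fin a → ℝ)).symm v‖ := by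
  rw [EuclideanSpace.norm_eq, colNorm]
  congr 1
  simp [dotProduct, Real.norm_eq_abs, sq_abs, pow_two]

lemma colNorm_nonneg {a : ℕ} (v : Fin a → ℝ) : 0 ≤ colNorm v := Real.sqrt_nonneg _

lemma dot_le_colNorm {a : ℕ} (v w : Fin a → ℝ) : v ⬝ᵥ w ≤ colNorm v * colNorm w := by
  have h := real_inner_le_norm ((WithLp.equiv 2 (Fin a → ℝ)).symm v)
    ((WithLp.equiv 2 (Fin a → ℝ)).symm w)
  rw [colNorm_eq, colNorm_eq]
  refine le_trans (le_of_eq ?_) h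
  rw [EuclideanSpace.inner_eq_star_dotProduct]
  simp [dotProduct, mul_comm]

lemma colNorm_mulVec_le {a b : ℕ} (N : Matrix (Fin a) (Fin b) ℝ) (v : Fin b → ℝ) :
    colNorm (N *ᵥ v) ≤ opNorm N * colNorm v := by
  have h := (LinearMap.toContinuousLinearMap (Matrix.toEuclideanLin N)).le_opNorm
    ((WithLp.equiv 2 (Fin b → ℝ)).symm v)
  simpa [colNorm_eq, opNorm] using h

lemma opNorm_nonneg {a b : ℕ} (N : Matrix (Fin a) (Fin b) ℝ) : 0 ≤ opNorm N := norm_nonneg _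

lemma opNorm_le_of_forall {a b : ℕ} (N : Matrix (Fin a) (Fin b) ℝ) (c : ℝ) (hc : 0 ≤ c)
    (h : ∀ v, colNorm (N *ᵥ v) ≤ c * colNorm v) : opNorm N ≤ c := by
  refine ContinuousLinearMap.opNorm_le_bound _ hc fun x => ?_
  have := h ((WithLp.equiv 2 (Fin b → ℝ)) x)
  simpa [colNorm_eq, opNorm, Matrix.toEuclideanLin_apply] using this

lemma traceInner_eq_sum {a b : ℕ} (M N : Matrix (Fin a) (Fin b) ℝ) :
    traceInner M N = ∑ i, ∑ j, M i j * N i j := by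
  rw [traceInner, Matrix.trace]
  simp only [Matrix.diag, Matrix.mul_apply, Matrix.transpose_apply]
  rw [Finset.sum_comm]

lemma traceInner_add_right {a b : ℕ} (M N N' : Matrix (Fin a) (Fin b) ℝ) :
    traceInner M (N + N') = traceInner M N + traceInner M N' := by
  simp [traceInner, Matrix.mul_add]

lemma traceInner_comm {a b : ℕ} (M N : Matrix (Fin a) (Fin b) ℝ) :
    traceInner M N = traceInner N M := by
  simp [traceInner_eq_sum, mul_comm]

lemma traceInner_self_nonneg {a b : ℕ} (M : Matrix (Fin a) (Fin b) ℝ) :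
    0 ≤ traceInner M M := by
  rw [traceInner_eq_sum]
  exact Finset.sum_nonneg fun i _ => Finset.sum_nonneg fun j _ => mul_self_nonneg _

lemma traceInner_expand {a b : ℕ} (E R : Matrix (Fin a) (Fin b) ℝ) :
    traceInner (E - R) (E - R)
      = traceInner E E - 2 * traceInner E R + traceInner R R := by
  have h : traceInner R E = traceInner E R := traceInner_comm R E
  simp only [traceInner_eq_sum, Matrix.sub_apply, sub_mul, mul_sub,
    Finset.sum_sub_distrib] at *
  linarith

lemma traceInner_mul_right {a b c : ℕ} (E : Matrix (Fin a) (Fin b) ℝ)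
    (X : Matrix (Fin a) (Fin c) ℝ) (Z : Matrix (Fin c) (Fin b) ℝ) :
    traceInner E (X * Z) = traceInner (E * Zᵀ) X := by
  rw [traceInner, traceInner, Matrix.transpose_mul, Matrix.transpose_transpose,
    ← Matrix.mul_assoc, Matrix.trace_mul_cycle]

lemma frob_sq {a b : ℕ} (M : Matrix (Fin a) (Fin b) ℝ) :
    frobNorm M ^ 2 = traceInner M M :=
  Real.sq_sqrt (traceInner_self_nonneg M)

lemma sqrt_trace_eq_sum {b : ℕ} {S : Matrix (Fin b) (Fin b) ℝ} (hS : S.PosSemidef) :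
    (psdSqrt hS).trace = ∑ i, Real.sqrt (hS.1.eigenvalues i) := by
  rw [psdSqrt, Matrix.trace_mul_cycle]
  have h1 : (star hS.1.eigenvectorUnitary.1 : Matrix (Fin b) (Fin b) ℝ)
      * hS.1.eigenvectorUnitary.1 = 1 := Unitary.coe_star_mul_self _
  rw [h1, Matrix.one_mul, Matrix.trace_diagonal]
  simp [RCLike.ofReal]

lemma nuclearNorm_eq_sum {a b : ℕ} (M : Matrix (Fin a) (Fin b) ℝ) :
    nuclearNorm M
      = ∑ i, Real.sqrt ((Matrix.posSemidef_conjTranspose_mul_self M).1.eigenvalues i) :=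
  sqrt_trace_eq_sum _

lemma nuclearNorm_nonneg {a b : ℕ} (M : Matrix (Fin a) (Fin b) ℝ) : 0 ≤ nuclearNorm M := by
  rw [nuclearNorm_eq_sum]
  exact Finset.sum_nonneg fun i _ => Real.sqrt_nonneg _

lemma quad_entry {b c : ℕ} (V : Matrix (Fin c) (Fin b) ℝ) (S : Matrix (Fin c) (Fin c) ℝ)
    (j : Fin b) :
    (Vᵀ * S * V) j j = (fun l => V l j) ⬝ᵥ (S *ᵥ (fun l => V l j)) := by
  simp only [Matrix.mul_apply, Matrix.transpose_apply, Matrix.mulVec, dotProduct,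
    Finset.sum_mul, Finset.mul_sum]
  rw [Finset.sum_comm]
  exact Finset.sum_congr rfl fun i _ => Finset.sum_congr rfl fun l _ => by ring

lemma dot_mulVec_self {a b : ℕ} (M : Matrix (Fin a) (Fin b) ℝ) (x : Fin b → ℝ) :
    (M *ᵥ x) ⬝ᵥ (M *ᵥ x) = x ⬝ᵥ ((Mᵀ * M) *ᵥ x) := by
  rw [← Matrix.mulVec_mulVec, dotProduct_mulVec x Mᵀ, Matrix.vecMul_transpose,
    dotProduct_comm]
lemma traceInner_le_opNorm_mul_nuclear {a b : ℕ} (N M : Matrix (Fin a) (Fin b) ℝ) :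
    traceInner N M ≤ opNorm N * nuclearNorm M := by
  classical
  set h := Matrix.posSemidef_conjTranspose_mul_self M with hh
  set V : Matrix (Fin b) (Fin b) ℝ := (h.1.eigenvectorUnitary : Matrix (Fin b) (Fin b) ℝ)
    with hV
  have hsV : star V = Vᵀ := by
    rw [Matrix.star_eq_conjTranspose, Matrix.conjTranspose_eq_transpose_of_trivial]
  have hVV : Vᵀ * V = 1 := by rw [← hsV]; exact Unitary.coe_star_mul_self _
  have hVV' : V * Vᵀ = 1 := by rw [← hsV]; exact Unitary.coe_mul_star_self _
  have hMH : Mᴴ = Mᵀ := Matrix.conjTranspose_eq_transpose_of_trivial M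
  have hdiag : Vᵀ * (Mᴴ * M) * V = Matrix.diagonal (h.1.eigenvalues) := by
    have h2 := herm_star_mul_self_mul_eq_diagonal h.1
    rw [← hV, hsV] at h2
    rw [h2]
    simp [RCLike.ofReal]
  set v : Fin b → Fin b → ℝ := fun j l => V l j with hv
  have hcol : ∀ (c : ℕ) (X : Matrix (Fin a) (Fin c) ℝ) (W : Matrix (Fin c) (Fin b) ℝ)
      (j : Fin b), (fun i => (X * W) i j) = X *ᵥ (fun l => W l j) := by
    intro c X W j
    funext i
    simp [Matrix.mul_apply, Matrix.mulVec, dotProduct]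
  have hvnorm : ∀ j, colNorm (v j) = 1 := by
    intro j
    have : (v j) ⬝ᵥ (v j) = (Vᵀ * V) j j := by
      simp [Matrix.mul_apply, dotProduct, hv]
    rw [colNorm, this, hVV]
    simp
  have hMv : ∀ j, (M *ᵥ v j) ⬝ᵥ (M *ᵥ v j) = h.1.eigenvalues j := by
    intro j
    rw [dot_mulVec_self, show (v j : Fin b → ℝ) ⬝ᵥ ((Mᵀ * M) *ᵥ v j)
        = (Vᵀ * (Mᵀ * M) * V) j j from (quad_entry V (Mᵀ * M) j).symm,
      show Mᵀ * M = Mᴴ * M by rw [hMH], hdiag]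
    simp
  have key : traceInner N M = ∑ j, (N *ᵥ v j) ⬝ᵥ (M *ᵥ v j) := by
    have e1 : traceInner (N * V) (M * V) = traceInner N M := by
      rw [traceInner, traceInner, Matrix.transpose_mul, Matrix.mul_assoc,
        Matrix.trace_mul_comm, Matrix.mul_assoc (Nᵀ) (M * V) Vᵀ,
        Matrix.mul_assoc M V Vᵀ, hVV', Matrix.mul_one]
    rw [← e1, traceInner_eq_sum, Finset.sum_comm]
    refine Finset.sum_congr rfl fun j _ => ?_
    rw [← hcol b N V j, ← hcol b M V j]
    rfl
  rw [key, nuclearNorm_eq_sum, Finset.mul_sum]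
  refine Finset.sum_le_sum fun j _ => ?_
  calc (N *ᵥ v j) ⬝ᵥ (M *ᵥ v j) ≤ colNorm (N *ᵥ v j) * colNorm (M *ᵥ v j) :=
        dot_le_colNorm _ _
    _ ≤ (opNorm N * colNorm (v j)) * colNorm (M *ᵥ v j) :=
        mul_le_mul_of_nonneg_right (colNorm_mulVec_le _ _) (colNorm_nonneg _)
    _ = opNorm N * Real.sqrt (h.1.eigenvalues j) := by
        rw [hvnorm j, mul_one]
        congr 1
        rw [colNorm, hMv j]

lemma dot_mulVec_self' {a b : ℕ} (M : Matrix (Fin a) (Fin b) ℝ) (x : Fin b → ℝ) :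
    (M *ᵥ x) ⬝ᵥ (M *ᵥ x) = x ⬝ᵥ ((Mᵀ * M) *ᵥ x) := by
  rw [← Matrix.mulVec_mulVec, dotProduct_mulVec x Mᵀ, Matrix.vecMul_transpose,
    dotProduct_comm]

lemma exists_dual {a b : ℕ} (M : Matrix (Fin a) (Fin b) ℝ) :
    ∃ N : Matrix (Fin a) (Fin b) ℝ, opNorm N ≤ 1 ∧ traceInner N M = nuclearNorm M := by
  classical
  set h := Matrix.posSemidef_conjTranspose_mul_self M with hh
  set V : Matrix (Fin b) (Fin b) ℝ := (h.1.eigenvectorUnitary : Matrix (Fin b) (Fin b) ℝ)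
    with hV
  set lam : Fin b → ℝ := h.1.eigenvalues with hlam
  have hlam0 : ∀ j, 0 ≤ lam j := fun j => h.eigenvalues_nonneg j
  have hsV : star V = Vᵀ := by
    rw [Matrix.star_eq_conjTranspose, Matrix.conjTranspose_eq_transpose_of_trivial]
  have hVV : Vᵀ * V = 1 := by rw [← hsV]; exact Unitary.coe_star_mul_self _
  have hVV' : V * Vᵀ = 1 := by rw [← hsV]; exact Unitary.coe_mul_star_self _
  have hMH : Mᴴ = Mᵀ := Matrix.conjTranspose_eq_transpose_of_trivial M
  have hspec : Mᴴ * M = V * Matrix.diagonal lam * Vᵀ := by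
    have h2 := Matrix.IsHermitian.spectral_theorem h.1
    rw [Unitary.conjStarAlgAut_apply, ← hV, hsV] at h2
    rw [h2]
    simp [RCLike.ofReal, hlam]
  set g : Fin b → ℝ := fun j => if lam j = 0 then 0 else (Real.sqrt (lam j))⁻¹ with hg
  have hglg : ∀ j, g j * lam j * g j = if lam j = 0 then 0 else 1 := by
    intro j
    by_cases hj : lam j = 0
    · simp [hg, hj]
    · have hpos : 0 < lam j := lt_of_le_of_ne (hlam0 j) (Ne.symm hj)
      have hs : Real.sqrt (lam j) ≠ 0 := ne_of_gt (Real.sqrt_pos.mpr hpos)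
      simp only [hg, hj, if_neg, if_false]
      field_simp
      rw [Real.sq_sqrt (hlam0 j)]
  have hgl : ∀ j, g j * lam j = Real.sqrt (lam j) := by
    intro j
    by_cases hj : lam j = 0
    · simp [hg, hj]
    · have hpos : 0 < lam j := lt_of_le_of_ne (hlam0 j) (Ne.symm hj)
      have hs : Real.sqrt (lam j) ≠ 0 := ne_of_gt (Real.sqrt_pos.mpr hpos)
      simp only [hg, hj, if_neg, if_false]
      field_simp
      rw [Real.sq_sqrt (hlam0 j)]
  set W : Matrix (Fin b) (Fin b) ℝ := V * Matrix.diagonal g * Vᵀ with hW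
  have hWt : Wᵀ = W := by
    rw [hW, Matrix.transpose_mul, Matrix.transpose_mul, Matrix.transpose_transpose,
      Matrix.diagonal_transpose, Matrix.mul_assoc]
  have hdot : ∀ (x : Fin b → ℝ) (c : Fin b → ℝ),
      x ⬝ᵥ ((V * Matrix.diagonal c * Vᵀ) *ᵥ x)
        = (Vᵀ *ᵥ x) ⬝ᵥ (Matrix.diagonal c *ᵥ (Vᵀ *ᵥ x)) := by
    intro x c
    rw [← Matrix.mulVec_mulVec, ← Matrix.mulVec_mulVec, dotProduct_mulVec x V,
      show x ᵥ* V = Vᵀ *ᵥ x from by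
        rw [← Matrix.transpose_transpose V, Matrix.vecMul_transpose,
          Matrix.transpose_transpose]]
  refine ⟨M * W, ?_, ?_⟩
  · -- operator norm ≤ 1
    have hNtN : (M * W)ᵀ * (M * W)
        = V * Matrix.diagonal (fun j => g j * lam j * g j) * Vᵀ := by
      have e0 : (M * W)ᵀ * (M * W) = Wᵀ * (Mᵀ * M) * W := by
        rw [Matrix.transpose_mul, Matrix.mul_assoc, ← Matrix.mul_assoc (Mᵀ) M W,
          ← Matrix.mul_assoc]
      rw [e0, hWt, show Mᵀ * M = Mᴴ * M by rw [hMH], hspec, hW]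
      rw [show V * Matrix.diagonal g * Vᵀ * (V * Matrix.diagonal lam * Vᵀ)
          * (V * Matrix.diagonal g * Vᵀ)
          = V * (Matrix.diagonal g * (Vᵀ * V) * Matrix.diagonal lam
            * ((Vᵀ * V) * Matrix.diagonal g * Vᵀ)) from by
        simp only [Matrix.mul_assoc], hVV]
      simp only [Matrix.one_mul, Matrix.mul_one]
      rw [show Matrix.diagonal g * Matrix.diagonal lam * (Matrix.diagonal g * Vᵀ)
          = (Matrix.diagonal g * Matrix.diagonal lam * Matrix.diagonal g) * Vᵀ from by
        simp only [Matrix.mul_assoc]]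
      rw [Matrix.diagonal_mul_diagonal, Matrix.diagonal_mul_diagonal, ← Matrix.mul_assoc]
    refine opNorm_le_of_forall _ 1 zero_le_one fun x => ?_
    rw [one_mul, colNorm, colNorm]
    apply Real.sqrt_le_sqrt
    rw [dot_mulVec_self', hNtN, hdot]
    set y : Fin b → ℝ := Vᵀ *ᵥ x with hy
    have hyy : y ⬝ᵥ y = x ⬝ᵥ x := by
      rw [hy, dot_mulVec_self' Vᵀ x, Matrix.transpose_transpose, hVV', Matrix.one_mulVec]
    rw [← hyy]
    simp only [dotProduct, Matrix.mulVec_diagonal]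
    refine Finset.sum_le_sum fun j _ => ?_
    rw [hglg j]
    by_cases hj : lam j = 0
    · simp [hj, mul_self_nonneg]
    · simp [hj]
  · -- trace value
    have e1 : traceInner (M * W) M = (W * (Mᴴ * M)).trace := by
      rw [traceInner, Matrix.transpose_mul, hWt, hMH, Matrix.mul_assoc]
    rw [e1, hspec, hW]
    rw [show V * Matrix.diagonal g * Vᵀ * (V * Matrix.diagonal lam * Vᵀ)
        = V * (Matrix.diagonal g * (Vᵀ * V) * Matrix.diagonal lam * Vᵀ) from by
      simp only [Matrix.mul_assoc], hVV]
    simp only [Matrix.mul_one, Matrix.one_mul]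
    rw [Matrix.trace_mul_comm,
      Matrix.mul_assoc (Matrix.diagonal g * Matrix.diagonal lam) Vᵀ V, hVV,
      Matrix.mul_one, Matrix.diagonal_mul_diagonal, Matrix.trace_diagonal]
    rw [nuclearNorm_eq_sum]
    exact Finset.sum_congr rfl fun j _ => hgl j

lemma nuclearNorm_nonneg' {a b : ℕ} (M : Matrix (Fin a) (Fin b) ℝ) : 0 ≤ nuclearNorm M := by
  rw [nuclearNorm_eq_sum]
  exact Finset.sum_nonneg fun i _ => Real.sqrt_nonneg _


lemma traceInner_add_right' {a b : ℕ} (M N N' : Matrix (Fin a) (Fin b) ℝ) :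
    traceInner M (N + N') = traceInner M N + traceInner M N' := by
  simp [traceInner, Matrix.mul_add]

lemma nuclearNorm_add_le {a b : ℕ} (X Y : Matrix (Fin a) (Fin b) ℝ) :
    nuclearNorm (X + Y) ≤ nuclearNorm X + nuclearNorm Y := by
  obtain ⟨N, hN1, hN2⟩ := exists_dual (X + Y)
  have hX := traceInner_le_opNorm_mul_nuclear N X
  have hY := traceInner_le_opNorm_mul_nuclear N Y
  have hOp := opNorm_nonneg N
  have h1 : opNorm N * nuclearNorm X ≤ nuclearNorm X :=
    mul_le_of_le_one_left (nuclearNorm_nonneg' X) hN1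
  have h2 : opNorm N * nuclearNorm Y ≤ nuclearNorm Y :=
    mul_le_of_le_one_left (nuclearNorm_nonneg' Y) hN1
  have h3 := traceInner_add_right' N X Y
  linarith [h3, h1, h2, hX, hY, hN2]

lemma sqrt_congr {b : ℕ} {S S' : Matrix (Fin b) (Fin b) ℝ} (h : S = S')
    (hS : S.PosSemidef) (hS' : S'.PosSemidef) : psdSqrt hS = psdSqrt hS' := by
  subst h; rfl

lemma nuclearNorm_congr {a b : ℕ} {X Y : Matrix (Fin a) (Fin b) ℝ}
    (h : Xᴴ * X = Yᴴ * Y) : nuclearNorm X = nuclearNorm Y := by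
  rw [nuclearNorm, nuclearNorm, sqrt_congr h]

lemma nuclearNorm_neg {a b : ℕ} (X : Matrix (Fin a) (Fin b) ℝ) :
    nuclearNorm (-X) = nuclearNorm X := by
  apply nuclearNorm_congr
  rw [Matrix.conjTranspose_neg, Matrix.neg_mul, Matrix.mul_neg, neg_neg]

-- psd products vanish
lemma sqrt_mul_sqrt_eq_zero {b : ℕ} {Pm Qm : Matrix (Fin b) (Fin b) ℝ}
    (hP : Pm.PosSemidef) (hQ : Qm.PosSemidef) (hPQ : Pm * Qm = 0) :
    psdSqrt hP * psdSqrt hQ = 0 := by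
  have hQs : (psdSqrt hQ).PosSemidef := psdSqrt_psd hQ
  have hPs : (psdSqrt hP).PosSemidef := psdSqrt_psd hP
  have step1 : Pm * psdSqrt hQ = 0 := by
    have h1 : (Pm * psdSqrt hQ) * (Pm * psdSqrt hQ)ᴴ = 0 := by
      rw [Matrix.conjTranspose_mul, hQs.1, hP.1]
      rw [show Pm * psdSqrt hQ * (psdSqrt hQ * Pm) = Pm * (psdSqrt hQ * psdSqrt hQ) * Pm from by
        simp only [Matrix.mul_assoc], psdSqrt_mul_self hQ, hPQ, Matrix.zero_mul]
    exact Matrix.self_mul_conjTranspose_eq_zero.mp h1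
  have step2 : (psdSqrt hP * psdSqrt hQ)ᴴ * (psdSqrt hP * psdSqrt hQ) = 0 := by
    rw [Matrix.conjTranspose_mul, hPs.1, hQs.1]
    rw [show psdSqrt hQ * psdSqrt hP * (psdSqrt hP * psdSqrt hQ)
        = psdSqrt hQ * ((psdSqrt hP * psdSqrt hP) * psdSqrt hQ) from by simp only [Matrix.mul_assoc],
      psdSqrt_mul_self hP, step1, Matrix.mul_zero]
  exact Matrix.conjTranspose_mul_self_eq_zero.mp step2

lemma nuclearNorm_add_of_orth {a b : ℕ} (X Y : Matrix (Fin a) (Fin b) ℝ)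
    (h1 : Xᵀ * Y = 0) (h2 : X * Yᵀ = 0) :
    nuclearNorm (X + Y) = nuclearNorm X + nuclearNorm Y := by
  have hMH : ∀ (c d : ℕ) (M : Matrix (Fin c) (Fin d) ℝ), Mᴴ = Mᵀ := fun c d M =>
    Matrix.conjTranspose_eq_transpose_of_trivial M
  have hP := Matrix.posSemidef_conjTranspose_mul_self X
  have hQ := Matrix.posSemidef_conjTranspose_mul_self Y
  have h1' : Xᴴ * Y = 0 := by rw [hMH]; exact h1
  have h1'' : Yᴴ * X = 0 := by
    have := congrArg Matrix.conjTranspose h1'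
    rwa [Matrix.conjTranspose_mul, Matrix.conjTranspose_conjTranspose,
      Matrix.conjTranspose_zero] at this
  have hsum : (X + Y)ᴴ * (X + Y) = Xᴴ * X + Yᴴ * Y := by
    rw [Matrix.conjTranspose_add, Matrix.add_mul, Matrix.mul_add, Matrix.mul_add,
      h1', h1'']
    simp
  have hPQ : (Xᴴ * X) * (Yᴴ * Y) = 0 := by
    rw [show Xᴴ * X * (Yᴴ * Y) = Xᴴ * ((X * Yᴴ) * Y) from by simp only [Matrix.mul_assoc],
      show X * Yᴴ = 0 from by rw [hMH]; exact h2]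
    simp
  have hz := sqrt_mul_sqrt_eq_zero hP hQ hPQ
  have hz' : psdSqrt hQ * psdSqrt hP = 0 := by
    have := congrArg Matrix.conjTranspose hz
    rwa [Matrix.conjTranspose_mul, (psdSqrt_psd hP).1, (psdSqrt_psd hQ).1,
      Matrix.conjTranspose_zero] at this
  have hsq : (psdSqrt hP + psdSqrt hQ) ^ 2 = Xᴴ * X + Yᴴ * Y := by
    rw [pow_two, Matrix.add_mul, Matrix.mul_add, Matrix.mul_add, hz, hz',
      psdSqrt_mul_self hP, psdSqrt_mul_self hQ]
    simp
  have hpsd : (psdSqrt hP + psdSqrt hQ).PosSemidef := (psdSqrt_psd hP).add (psdSqrt_psd hQ)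
  have hPQpsd : (Xᴴ * X + Yᴴ * Y).PosSemidef := hP.add hQ
  have hfin : psdSqrt hP + psdSqrt hQ = psdSqrt hPQpsd := psd_eq_psdSqrt_of_sq_eq hpsd hPQpsd hsq
  rw [nuclearNorm, nuclearNorm, nuclearNorm,
    sqrt_congr hsum (Matrix.posSemidef_conjTranspose_mul_self (X + Y)) hPQpsd, ← hfin,
    Matrix.trace_add]

lemma vecL1_nonneg {a b : ℕ} (M : Matrix (Fin a) (Fin b) ℝ) : 0 ≤ vecL1 M :=
  Finset.sum_nonneg fun i _ => Finset.sum_nonneg fun j _ => abs_nonneg _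

lemma abs_le_vecLinf {a b : ℕ} (N : Matrix (Fin a) (Fin b) ℝ) (i : Fin a) (j : Fin b) :
    |N i j| ≤ vecLinf N := by
  have h1 : |N i j| ≤ ⨆ j', |N i j'| :=
    le_ciSup (f := fun j' => |N i j'|) (Set.Finite.bddAbove (Set.finite_range _)) j
  have h2 : (⨆ j', |N i j'|) ≤ ⨆ i', ⨆ j', |N i' j'| :=
    le_ciSup (f := fun i' => ⨆ j', |N i' j'|) (Set.Finite.bddAbove (Set.finite_range _)) i
  exact h1.trans h2

lemma traceInner_le_vecLinf_mul_vecL1 {a b : ℕ} (N M : Matrix (Fin a) (Fin b) ℝ) :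
    traceInner N M ≤ vecLinf N * vecL1 M := by
  rw [traceInner_eq_sum, vecL1, Finset.mul_sum]
  refine Finset.sum_le_sum fun i _ => ?_
  rw [Finset.mul_sum]
  refine Finset.sum_le_sum fun j _ => ?_
  calc N i j * M i j ≤ |N i j * M i j| := le_abs_self _
    _ = |N i j| * |M i j| := abs_mul _ _
    _ ≤ vecLinf N * |M i j| :=
        mul_le_mul_of_nonneg_right (abs_le_vecLinf N i j) (abs_nonneg _)

lemma vecLinf_nonneg {a b : ℕ} (ha : 0 < a) (hb : 0 < b)
    (N : Matrix (Fin a) (Fin b) ℝ) : 0 ≤ vecLinf N :=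
  le_trans (abs_nonneg _) (abs_le_vecLinf N ⟨0, ha⟩ ⟨0, hb⟩)

lemma vecL1_add_le {a b : ℕ} (X Y : Matrix (Fin a) (Fin b) ℝ) :
    vecL1 (X + Y) ≤ vecL1 X + vecL1 Y := by
  rw [vecL1, vecL1, vecL1, ← Finset.sum_add_distrib]
  refine Finset.sum_le_sum fun i _ => ?_
  rw [← Finset.sum_add_distrib]
  exact Finset.sum_le_sum fun j _ => by simpa using abs_add_le (X i j) (Y i j)

set_option maxHeartbeats 1000000 in
open scoped Classical in
/-- Cone membership in the proof of Theorem 3: under the stated choices of the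
regularization parameters, the estimation error lies in the restricted cone. -/
theorem stmt_7
    (p m q T : ℕ) (hp : 0 < p) (hm : 0 < m) (hq : 0 < q) (hT : 0 < T)
    (Y E : Matrix (Fin p) (Fin T) ℝ) (Z : Matrix (Fin m) (Fin T) ℝ)
    (P : Matrix (Fin q) (Fin T) ℝ)
    (A Ah : Matrix (Fin p) (Fin m) ℝ) (Φ Φh : Matrix (Fin p) (Fin q) ℝ)
    (hmodel : Y = A * Z + Φ * P + E)
    (lA lΦ : ℝ) (hlA0 : 0 < lA) (hlΦ0 : 0 < lΦ)
    (hlA : lA ≥ 3 / (T : ℝ) * opNorm (E * Zᵀ))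
    (hlΦ : lΦ ≥ 2 / (T : ℝ) * vecLinf (E * Pᵀ))
    (hopt :
      (1 / (2 * (T : ℝ))) * frobNorm (Y - Ah * Z - Φh * P) ^ 2
          + lA * nuclearNorm Ah + lΦ * vecL1 Φh
        ≤ (1 / (2 * (T : ℝ))) * frobNorm (Y - A * Z - Φ * P) ^ 2
          + lA * nuclearNorm A + lΦ * vecL1 Φ)
    (k : ℕ)
    (Uk : Matrix (Fin p) (Fin k) ℝ) (Uc : Matrix (Fin p) (Fin (p - k)) ℝ)
    (Vk : Matrix (Fin m) (Fin k) ℝ) (Vc : Matrix (Fin m) (Fin (m - k)) ℝ)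
    (hUk : Ukᵀ * Uk = 1) (hUc : Ucᵀ * Uc = 1) (hUkc : Ukᵀ * Uc = 0)
    (hUfull : Uk * Ukᵀ + Uc * Ucᵀ = 1)
    (hVk : Vkᵀ * Vk = 1) (hVc : Vcᵀ * Vc = 1) (hVkc : Vkᵀ * Vc = 0)
    (hVfull : Vk * Vkᵀ + Vc * Vcᵀ = 1)
    (D : Matrix (Fin k) (Fin k) ℝ) (hA : A = Uk * D * Vkᵀ)
    (ΔA1 ΔA2 : Matrix (Fin p) (Fin m) ℝ)
    (hΔA2 : ΔA2 = Uc * Ucᵀ * (Ah - A) * Vc * Vcᵀ) (hΔA1 : ΔA1 = (Ah - A) - ΔA2)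
    (ΔΦ1 ΔΦ2 : Matrix (Fin p) (Fin q) ℝ)
    (hΔΦ1 : ∀ i j, ΔΦ1 i j = if Φ i j = 0 then 0 else (Φh - Φ) i j)
    (hΔΦ2 : ΔΦ2 = (Φh - Φ) - ΔΦ1) :
    lA * nuclearNorm ΔA2 + lΦ * vecL1 ΔΦ2
      ≤ 3 * lA * nuclearNorm ΔA1 + 3 * lΦ * vecL1 ΔΦ1 := by
  classical
  have hT' : (0:ℝ) < (T:ℝ) := by exact_mod_cast hT
  have hTne : (T:ℝ) ≠ 0 := ne_of_gt hT'
  set ΔA : Matrix (Fin p) (Fin m) ℝ := Ah - A with hΔA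
  set ΔΦ : Matrix (Fin p) (Fin q) ℝ := Φh - Φ with hΔΦ
  set R : Matrix (Fin p) (Fin T) ℝ := ΔA * Z + ΔΦ * P with hRdef
  have hE : Y - A * Z - Φ * P = E := by rw [hmodel]; abel
  have hRes : Y - Ah * Z - Φh * P = E - R := by
    rw [hmodel, hRdef, hΔA, hΔΦ]
    simp only [Matrix.sub_mul]
    abel
  have hfrob2 : frobNorm (Y - A * Z - Φ * P) ^ 2 = traceInner E E := by
    rw [hE, frob_sq]
  have hfrob1 : frobNorm (Y - Ah * Z - Φh * P) ^ 2
      = traceInner E E - 2 * traceInner E R + traceInner R R := by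
    rw [hRes, frob_sq, traceInner_expand]
  rw [hfrob1, hfrob2] at hopt
  -- decompositions of the errors
  have hΔA12 : ΔA = ΔA1 + ΔA2 := by rw [hΔA1]; abel
  have hΔΦ12 : ΔΦ = ΔΦ1 + ΔΦ2 := by rw [hΔΦ2]; abel
  have hnucΔA : nuclearNorm ΔA ≤ nuclearNorm ΔA1 + nuclearNorm ΔA2 := by
    rw [hΔA12]; exact nuclearNorm_add_le _ _
  have hvΔΦ : vecL1 ΔΦ ≤ vecL1 ΔΦ1 + vecL1 ΔΦ2 := by
    rw [hΔΦ12]; exact vecL1_add_le _ _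
  -- regularization parameter bounds
  have hopZ : opNorm (E * Zᵀ) ≤ (T:ℝ) * lA / 3 := by
    have h1 : ((T:ℝ)/3) * (3 / (T:ℝ) * opNorm (E * Zᵀ)) ≤ ((T:ℝ)/3) * lA :=
      mul_le_mul_of_nonneg_left hlA (by positivity)
    have h2 : ((T:ℝ)/3) * (3 / (T:ℝ) * opNorm (E * Zᵀ)) = opNorm (E * Zᵀ) := by
      field_simp
    linarith
  have hinfP : vecLinf (E * Pᵀ) ≤ (T:ℝ) * lΦ / 2 := by
    have h1 : ((T:ℝ)/2) * (2 / (T:ℝ) * vecLinf (E * Pᵀ)) ≤ ((T:ℝ)/2) * lΦ :=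
      mul_le_mul_of_nonneg_left hlΦ (by positivity)
    have h2 : ((T:ℝ)/2) * (2 / (T:ℝ) * vecLinf (E * Pᵀ)) = vecLinf (E * Pᵀ) := by
      field_simp
    linarith
  -- bound on the inner product
  have hxbound : traceInner E R ≤ ((T:ℝ) * lA / 3) * (nuclearNorm ΔA1 + nuclearNorm ΔA2)
      + ((T:ℝ) * lΦ / 2) * (vecL1 ΔΦ1 + vecL1 ΔΦ2) := by
    rw [hRdef, traceInner_add_right, traceInner_mul_right, traceInner_mul_right]
    have b1 : traceInner (E * Zᵀ) ΔA
        ≤ ((T:ℝ) * lA / 3) * (nuclearNorm ΔA1 + nuclearNorm ΔA2) :=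
      calc traceInner (E * Zᵀ) ΔA ≤ opNorm (E * Zᵀ) * nuclearNorm ΔA :=
            traceInner_le_opNorm_mul_nuclear _ _
        _ ≤ ((T:ℝ) * lA / 3) * nuclearNorm ΔA :=
            mul_le_mul_of_nonneg_right hopZ (nuclearNorm_nonneg _)
        _ ≤ ((T:ℝ) * lA / 3) * (nuclearNorm ΔA1 + nuclearNorm ΔA2) :=
            mul_le_mul_of_nonneg_left hnucΔA (by positivity)
    have b2 : traceInner (E * Pᵀ) ΔΦ
        ≤ ((T:ℝ) * lΦ / 2) * (vecL1 ΔΦ1 + vecL1 ΔΦ2) :=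
      calc traceInner (E * Pᵀ) ΔΦ ≤ vecLinf (E * Pᵀ) * vecL1 ΔΦ :=
            traceInner_le_vecLinf_mul_vecL1 _ _
        _ ≤ ((T:ℝ) * lΦ / 2) * vecL1 ΔΦ :=
            mul_le_mul_of_nonneg_right hinfP (vecL1_nonneg _)
        _ ≤ ((T:ℝ) * lΦ / 2) * (vecL1 ΔΦ1 + vecL1 ΔΦ2) :=
            mul_le_mul_of_nonneg_left hvΔΦ (by positivity)
    linarith
  -- decomposability of the nuclear norm
  have o1 : Aᵀ * ΔA2 = 0 := by
    rw [hA, hΔA2]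
    simp only [Matrix.transpose_mul, Matrix.transpose_transpose]
    simp only [← Matrix.mul_assoc]
    rw [Matrix.mul_assoc (Vk * Dᵀ) Ukᵀ Uc, hUkc]
    simp
  have o2 : A * ΔA2ᵀ = 0 := by
    rw [hA, hΔA2]
    simp only [Matrix.transpose_mul, Matrix.transpose_transpose]
    simp only [← Matrix.mul_assoc]
    rw [Matrix.mul_assoc (Uk * D) Vkᵀ Vc, hVkc]
    simp
  have hdec : nuclearNorm (A + ΔA2) = nuclearNorm A + nuclearNorm ΔA2 :=
    nuclearNorm_add_of_orth A ΔA2 o1 o2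
  have hnucAh : nuclearNorm A + nuclearNorm ΔA2 - nuclearNorm ΔA1 ≤ nuclearNorm Ah := by
    have hAh2 : A + ΔA2 = Ah + (-ΔA1) := by rw [hΔA1, hΔA]; abel
    have h4 : nuclearNorm (A + ΔA2) ≤ nuclearNorm Ah + nuclearNorm (-ΔA1) := by
      rw [hAh2]; exact nuclearNorm_add_le _ _
    rw [nuclearNorm_neg, hdec] at h4
    linarith
  -- lower bound on vecL1 Φh
  have hvΦh : vecL1 Φ + vecL1 ΔΦ2 - vecL1 ΔΦ1 ≤ vecL1 Φh := by
    have hptwise : ∀ i j, |Φ i j| + |ΔΦ2 i j| - |ΔΦ1 i j| ≤ |Φh i j| := by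
      intro i j
      have e2 : ΔΦ2 i j = ΔΦ i j - ΔΦ1 i j := by rw [hΔΦ2, Matrix.sub_apply]
      by_cases h0 : Φ i j = 0
      · have e1 : ΔΦ1 i j = 0 := by rw [hΔΦ1 i j, if_pos h0]
        rw [e2, e1, hΔΦ]
        simp [Matrix.sub_apply, h0]
      · have e1 : ΔΦ1 i j = ΔΦ i j := by rw [hΔΦ1 i j, if_neg h0]
        rw [e2, e1, hΔΦ]
        simp only [Matrix.sub_apply, sub_self, abs_zero, add_zero]
        have h5 := abs_sub_abs_le_abs_sub (Φ i j) (Φh i j)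
        have h6 : |Φ i j - Φh i j| = |Φh i j - Φ i j| := abs_sub_comm _ _
        linarith
    have hsum : ∑ i, ∑ j, (|Φ i j| + |ΔΦ2 i j| - |ΔΦ1 i j|) ≤ ∑ i, ∑ j, |Φh i j| :=
      Finset.sum_le_sum fun i _ => Finset.sum_le_sum fun j _ => hptwise i j
    simp only [Finset.sum_add_distrib, Finset.sum_sub_distrib] at hsum
    simpa [vecL1] using hsum
  -- arithmetic conclusion
  have hcr : 0 ≤ (1/(2*(T:ℝ))) * traceInner R R :=
    mul_nonneg (by positivity) (traceInner_self_nonneg R)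
  have hkey : lA * nuclearNorm Ah + lΦ * vecL1 Φh
      ≤ 2*(1/(2*(T:ℝ))) * traceInner E R + lA * nuclearNorm A + lΦ * vecL1 Φ := by
    linarith [hopt, hcr]
  have hx2 : 2*(1/(2*(T:ℝ))) * traceInner E R
      ≤ 2*(1/(2*(T:ℝ))) * (((T:ℝ) * lA / 3) * (nuclearNorm ΔA1 + nuclearNorm ΔA2)
        + ((T:ℝ) * lΦ / 2) * (vecL1 ΔΦ1 + vecL1 ΔΦ2)) :=
    mul_le_mul_of_nonneg_left hxbound (by positivity)
  have hx3 : 2*(1/(2*(T:ℝ))) * (((T:ℝ) * lA / 3) * (nuclearNorm ΔA1 + nuclearNorm ΔA2)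
        + ((T:ℝ) * lΦ / 2) * (vecL1 ΔΦ1 + vecL1 ΔΦ2))
      = lA/3 * (nuclearNorm ΔA1 + nuclearNorm ΔA2)
        + lΦ/2 * (vecL1 ΔΦ1 + vecL1 ΔΦ2) := by
    field_simp
  have hLA : lA * (nuclearNorm A + nuclearNorm ΔA2 - nuclearNorm ΔA1)
      ≤ lA * nuclearNorm Ah := mul_le_mul_of_nonneg_left hnucAh hlA0.le
  have hLΦ : lΦ * (vecL1 Φ + vecL1 ΔΦ2 - vecL1 ΔΦ1)
      ≤ lΦ * vecL1 Φh := mul_le_mul_of_nonneg_left hvΦh hlΦ0.le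
  have n1 : 0 ≤ lA * nuclearNorm ΔA1 := mul_nonneg hlA0.le (nuclearNorm_nonneg _)
  have n2 : 0 ≤ lA * nuclearNorm ΔA2 := mul_nonneg hlA0.le (nuclearNorm_nonneg _)
  have n3 : 0 ≤ lΦ * vecL1 ΔΦ1 := mul_nonneg hlΦ0.le (vecL1_nonneg _)
  have n4 : 0 ≤ lΦ * vecL1 ΔΦ2 := mul_nonneg hlΦ0.le (vecL1_nonneg _)
  linarith [hkey, hx2, hx3, hLA, hLΦ, n1, n2, n3, n4]
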